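/- Let E be a pseudo effect algebra satisfying (RDP), let s₁, s₂ be states on E, and let F₁, F₂ be the faces of S(E) generated by s₁ and s₂ respectively. The following are equivalent: (i) F₁ ∩ F₂ = ∅; (ii) s₁ ⋀ s₂ = 0 in the lattice J(E); (iii) s₁ ⋁ s₂ = s₁ + s₂ in J(E); (iv) for every x ∈ E and every ε > 0 there exist x₁, x₂ ∈ E with x = x₁ + x₂ and sᵢ(x ∕ xᵢ) < ε for i = 1, 2, where for a ≤ b, b ∕ a denotes the unique element with (b ∕ a) + a = b. -/

import Mathlib

/-- A pseudo effect algebra: a partial algebra `(E; +, 0, 1)` where the partial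
addition is encoded as `padd : E → E → Option E` (`padd a b = some c` means
`a + b` is defined and equals `c`). -/
class PseudoEffectAlgebra (E : Type) where
  padd : E → E → Option E
  pzero : E
  pone : E
  /-- (i) `a+b` and `(a+b)+c` exist iff `b+c` and `a+(b+c)` exist ... -/
  assoc_defined : ∀ a b c : E,
    (∃ x, padd a b = some x ∧ (padd x c).isSome) ↔
      (∃ y, padd b c = some y ∧ (padd a y).isSome)
  /-- ... and in this case `(a+b)+c = a+(b+c)`. -/
  assoc_eq : ∀ a b c x y : E, padd a b = some x → padd b c = some y →
    padd x c = padd a y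
  /-- (ii) there is exactly one `d` with `a + d = 1`. -/
  exists_unique_right : ∀ a : E, ∃! d, padd a d = some pone
  /-- (ii) there is exactly one `e` with `e + a = 1`. -/
  exists_unique_left : ∀ a : E, ∃! e, padd e a = some pone
  /-- (iii) if `a+b` exists, there are `d, e` with `a+b = d+a = b+e`. -/
  shift : ∀ a b c : E, padd a b = some c →
    ∃ d e, padd d a = some c ∧ padd b e = some c
  /-- (iv) if `1+a` exists then `a = 0`. -/
  one_add : ∀ a : E, (padd pone a).isSome → a = pzero
  /-- (iv) if `a+1` exists then `a = 0`. -/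
  add_one : ∀ a : E, (padd a pone).isSome → a = pzero

namespace PseudoEffectAlgebra

variable {E : Type} [PseudoEffectAlgebra E]

/-- The induced partial order: `a ≤ b` iff `b = a + c` for some `c ∈ E`. -/
def pLe (a b : E) : Prop := ∃ c, padd a c = some b

/-- The Riesz Decomposition Property (RDP). -/
def RDP (E : Type) [PseudoEffectAlgebra E] : Prop :=
  ∀ a₁ a₂ b₁ b₂ c : E, padd a₁ a₂ = some c → padd b₁ b₂ = some c →
    ∃ d₁ d₂ d₃ d₄ : E, padd d₁ d₂ = some a₁ ∧ padd d₃ d₄ = some a₂ ∧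
      padd d₁ d₃ = some b₁ ∧ padd d₂ d₄ = some b₂

/-- A signed measure on `E`. -/
def IsSignedMeasure (m : E → ℝ) : Prop :=
  ∀ a b c : E, padd a b = some c → m c = m a + m b

/-- A (positive) measure on `E`. -/
def IsMeasure (m : E → ℝ) : Prop :=
  IsSignedMeasure m ∧ ∀ a : E, 0 ≤ m a

/-- A state on `E`. -/
def IsState (s : E → ℝ) : Prop := IsMeasure s ∧ s pone = 1

/-- A Jordan signed measure: a difference of two measures. -/
def IsJordan (m : E → ℝ) : Prop :=
  ∃ m₁ m₂ : E → ℝ, IsMeasure m₁ ∧ IsMeasure m₂ ∧ m = m₁ - m₂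

/-- `m ≤⁺ m'` iff `m' - m` is a (positive) measure. -/
def MLe (m m' : E → ℝ) : Prop := IsMeasure (m' - m)

/-- The (partial) sum `x₁ + ⋯ + xₙ` of a nonempty list of elements of `E`. -/
def lsum : List E → Option E
  | [] => some pzero
  | [a] => some a
  | a :: b :: l => (lsum (b :: l)).bind (fun s => padd a s)

/-- `m` is the supremum, in the po-group `J(E)` of Jordan signed measures ordered
by `≤⁺`, of the set `S`. -/
def IsSupIn (S : Set (E → ℝ)) (m : E → ℝ) : Prop :=
  IsJordan m ∧ (∀ t ∈ S, MLe t m) ∧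
    ∀ h : E → ℝ, IsJordan h → (∀ t ∈ S, MLe t h) → MLe m h

/-- `m` is the infimum, in the po-group `J(E)` of Jordan signed measures ordered
by `≤⁺`, of the set `S`. -/
def IsInfIn (S : Set (E → ℝ)) (m : E → ℝ) : Prop :=
  IsJordan m ∧ (∀ t ∈ S, MLe m t) ∧
    ∀ h : E → ℝ, IsJordan h → (∀ t ∈ S, MLe h t) → MLe h m

variable (E) in
/-- The state space `S(E)`. -/
def stateSet : Set (E → ℝ) := {s | IsState s}

variable (E) in
/-- A face of the convex set `S(E)`. -/
def IsFace (F : Set (E → ℝ)) : Prop :=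
  F ⊆ stateSet E ∧
  (∀ s₁ ∈ F, ∀ s₂ ∈ F, ∀ lam : ℝ, 0 ≤ lam → lam ≤ 1 →
    lam • s₁ + (1 - lam) • s₂ ∈ F) ∧
  (∀ s₁ ∈ stateSet E, ∀ s₂ ∈ stateSet E, ∀ lam : ℝ, 0 < lam → lam < 1 →
    lam • s₁ + (1 - lam) • s₂ ∈ F → s₁ ∈ F ∧ s₂ ∈ F)

variable (E) in
/-- The face of `S(E)` generated by a set `X` (the smallest face containing `X`). -/
def faceGen (X : Set (E → ℝ)) : Set (E → ℝ) :=
  ⋂₀ {F : Set (E → ℝ) | IsFace E F ∧ X ⊆ F}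

/-! ### Auxiliary lemmas -/

lemma passoc₁ {a b c x z : E} (h1 : padd a b = some x) (h2 : padd x c = some z) :
    ∃ y, padd b c = some y ∧ padd a y = some z := by
  obtain ⟨y, hy, hs⟩ := (assoc_defined a b c).mp ⟨x, h1, by rw [h2]; rfl⟩
  refine ⟨y, hy, ?_⟩
  have h := assoc_eq a b c x y h1 hy
  rw [← h, h2]

lemma passoc₂ {a b c y z : E} (h1 : padd b c = some y) (h2 : padd a y = some z) :
    ∃ x, padd a b = some x ∧ padd x c = some z := by
  obtain ⟨x, hx, hs⟩ := (assoc_defined a b c).mpr ⟨y, h1, by rw [h2]; rfl⟩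
  refine ⟨x, hx, ?_⟩
  have h := assoc_eq a b c x y hx h1
  rw [h, h2]

lemma one_padd_zero : (padd (pone : E) pzero) = some pone := by
  obtain ⟨d, hd, -⟩ := exists_unique_right (pone : E)
  have : d = pzero := one_add d (by rw [hd]; rfl)
  rwa [this] at hd

lemma zero_padd_one : (padd (pzero : E) pone) = some pone := by
  obtain ⟨e, he, -⟩ := exists_unique_left (pone : E)
  have : e = pzero := add_one e (by rw [he]; rfl)
  rwa [this] at he

lemma padd_zero (a : E) : padd a pzero = some a := by
  obtain ⟨e, he, -⟩ := exists_unique_left a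
  obtain ⟨y, hy, hey⟩ := passoc₁ he one_padd_zero
  obtain ⟨d, -, hu⟩ := exists_unique_right e
  have h1 : y = d := hu y hey
  have h2 : a = d := hu a he
  rw [hy, h1, ← h2]

lemma zero_padd (a : E) : padd pzero a = some a := by
  obtain ⟨d, hd, -⟩ := exists_unique_right a
  obtain ⟨x, hx, hxd⟩ := passoc₂ hd zero_padd_one
  obtain ⟨e, -, hu⟩ := exists_unique_left d
  have h1 : x = e := hu x hxd
  have h2 : a = e := hu a hd
  rw [hx, h1, ← h2]

lemma sm_zero {m : E → ℝ} (hm : IsSignedMeasure m) : m pzero = 0 := by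
  have := hm pzero pzero pzero (padd_zero pzero)
  linarith

lemma jordan_sm {m : E → ℝ} (h : IsJordan m) : IsSignedMeasure m := by
  obtain ⟨m₁, m₂, hm₁, hm₂, rfl⟩ := h
  intro a b c hc
  have e1 := hm₁.1 a b c hc
  have e2 := hm₂.1 a b c hc
  simp only [Pi.sub_apply]
  linarith

lemma mle_le {m m' : E → ℝ} (h : MLe m m') : ∀ a, m a ≤ m' a := fun a => by
  have := h.2 a
  simp only [Pi.sub_apply] at this
  linarith

lemma isMeasure_congr {m m' : E → ℝ} (hm : IsMeasure m) (h : ∀ x, m x = m' x) :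
    IsMeasure m' := (funext h : m = m') ▸ hm

lemma zero_isMeasure : IsMeasure (0 : E → ℝ) :=
  ⟨fun _ _ _ _ => by simp, fun _ => le_refl _⟩

lemma measure_isJordan {m : E → ℝ} (hm : IsMeasure m) : IsJordan m :=
  ⟨m, 0, hm, zero_isMeasure, (sub_zero m).symm⟩

/-! ### The infimum measure -/

/-- Decomposition values set: `{s₂ a + s₁ b : a + b = x}`. -/
def Dset (s₁ s₂ : E → ℝ) (x : E) : Set ℝ :=
  {r | ∃ a b, padd a b = some x ∧ r = s₂ a + s₁ b}

section dd
variable {s₁ s₂ : E → ℝ} (hs₁ : IsState s₁) (hs₂ : IsState s₂)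

lemma Dset_nonempty (x : E) : (Dset s₁ s₂ x).Nonempty :=
  ⟨s₂ pzero + s₁ x, pzero, x, zero_padd x, rfl⟩

include hs₁ hs₂ in
lemma Dset_bdd (x : E) : ∀ r ∈ Dset s₁ s₂ x, (0:ℝ) ≤ r := by
  rintro r ⟨a, b, -, rfl⟩
  have := hs₂.1.2 a
  have := hs₁.1.2 b
  linarith

/-- `dd x = inf {s₂ a + s₁ b : a + b = x}`. -/
noncomputable def dd (s₁ s₂ : E → ℝ) (x : E) : ℝ := sInf (Dset s₁ s₂ x)

include hs₁ hs₂ in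
lemma dd_nonneg (x : E) : 0 ≤ dd s₁ s₂ x :=
  le_csInf (Dset_nonempty x) (Dset_bdd hs₁ hs₂ x)

include hs₁ hs₂ in
lemma dd_le {x a b : E} (h : padd a b = some x) : dd s₁ s₂ x ≤ s₂ a + s₁ b :=
  csInf_le ⟨0, Dset_bdd hs₁ hs₂ x⟩ ⟨a, b, h, rfl⟩

include hs₁ hs₂ in
lemma dd_le_s₁ (x : E) : dd s₁ s₂ x ≤ s₁ x := by
  have := dd_le hs₁ hs₂ (zero_padd x)
  rw [sm_zero hs₂.1.1] at this
  linarith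

include hs₁ hs₂ in
lemma dd_le_s₂ (x : E) : dd s₁ s₂ x ≤ s₂ x := by
  have := dd_le hs₁ hs₂ (padd_zero x)
  rw [sm_zero hs₁.1.1] at this
  linarith

include hs₁ hs₂ in
lemma dd_sm (hRDP : RDP E) : IsSignedMeasure (dd s₁ s₂) := by
  intro x y z hz
  have hle1 : dd s₁ s₂ z ≤ dd s₁ s₂ x + dd s₁ s₂ y := by
    have key : ∀ r₁ ∈ Dset s₁ s₂ x, ∀ r₂ ∈ Dset s₁ s₂ y, dd s₁ s₂ z ≤ r₁ + r₂ := by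
      rintro r₁ ⟨a₁, a₂, ha, rfl⟩ r₂ ⟨b₁, b₂, hb, rfl⟩
      obtain ⟨w, hw1, hw2⟩ := passoc₁ ha hz
      obtain ⟨u, hu1, hu2⟩ := passoc₂ hb hw1
      obtain ⟨p, q, hp, -⟩ := shift a₂ b₁ u hu1
      obtain ⟨v, hv1, hv2⟩ := passoc₁ hp hu2
      obtain ⟨z₁, hz₁, hz₂⟩ := passoc₂ hv2 hw2
      have h1 : dd s₁ s₂ z ≤ s₂ z₁ + s₁ v := dd_le hs₁ hs₂ hz₂
      have e1 := hs₂.1.1 a₂ b₁ u hu1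
      have e2 := hs₂.1.1 p a₂ u hp
      have e3 := hs₂.1.1 a₁ p z₁ hz₁
      have e4 := hs₁.1.1 a₂ b₂ v hv1
      linarith
    have step1 : ∀ r₂ ∈ Dset s₁ s₂ y, dd s₁ s₂ z - r₂ ≤ dd s₁ s₂ x := by
      intro r₂ hr₂
      refine le_csInf (Dset_nonempty x) (fun r₁ hr₁ => ?_)
      have := key r₁ hr₁ r₂ hr₂
      linarith
    have step2 : dd s₁ s₂ z - dd s₁ s₂ x ≤ dd s₁ s₂ y := by
      refine le_csInf (Dset_nonempty y) (fun r₂ hr₂ => ?_)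
      have := step1 r₂ hr₂
      linarith
    linarith
  have hle2 : dd s₁ s₂ x + dd s₁ s₂ y ≤ dd s₁ s₂ z := by
    refine le_csInf (Dset_nonempty z) ?_
    rintro r ⟨z₁, z₂, hzd, rfl⟩
    obtain ⟨d₁, d₂, d₃, d₄, e₁, e₂, e₃, e₄⟩ := hRDP z₁ z₂ x y z hzd hz
    have h1 : dd s₁ s₂ x ≤ s₂ d₁ + s₁ d₃ := dd_le hs₁ hs₂ e₃
    have h2 : dd s₁ s₂ y ≤ s₂ d₂ + s₁ d₄ := dd_le hs₁ hs₂ e₄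
    have f1 := hs₂.1.1 d₁ d₂ z₁ e₁
    have f2 := hs₁.1.1 d₃ d₄ z₂ e₂
    linarith
  linarith

include hs₁ hs₂ in
lemma dd_isMeasure (hRDP : RDP E) : IsMeasure (dd s₁ s₂) :=
  ⟨dd_sm hs₁ hs₂ hRDP, dd_nonneg hs₁ hs₂⟩

include hs₁ hs₂ in
lemma dd_isInf (hRDP : RDP E) : IsInfIn {s₁, s₂} (dd s₁ s₂) := by
  refine ⟨measure_isJordan (dd_isMeasure hs₁ hs₂ hRDP), ?_, ?_⟩
  · rintro t (rfl | rfl)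
    · exact ⟨fun a b c h => by
        simp only [Pi.sub_apply, hs₁.1.1 a b c h, dd_sm hs₁ hs₂ hRDP a b c h]; ring,
        fun a => by simp only [Pi.sub_apply]; have := dd_le_s₁ hs₁ hs₂ a; linarith⟩
    · exact ⟨fun a b c h => by
        simp only [Pi.sub_apply, hs₂.1.1 a b c h, dd_sm hs₁ hs₂ hRDP a b c h]; ring,
        fun a => by simp only [Pi.sub_apply]; have := dd_le_s₂ hs₁ hs₂ a; linarith⟩
  · intro h hJ hlb
    have hsm := jordan_sm hJ
    have h1 := hlb s₁ (Or.inl rfl)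
    have h2 := hlb s₂ (Or.inr rfl)
    refine ⟨fun a b c hc => by
      simp only [Pi.sub_apply, hsm a b c hc, dd_sm hs₁ hs₂ hRDP a b c hc]; ring,
      fun x => ?_⟩
    simp only [Pi.sub_apply, sub_nonneg]
    refine le_csInf (Dset_nonempty x) ?_
    rintro r ⟨a, b, hab, rfl⟩
    have := hsm a b x hab
    have := mle_le h2 a
    have := mle_le h1 b
    linarith

include hs₁ hs₂ in
lemma inf_zero_iff_dd (hRDP : RDP E) :
    IsInfIn {s₁, s₂} (0 : E → ℝ) ↔ ∀ x, dd s₁ s₂ x = 0 := by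
  constructor
  · intro hinf x
    have hd := dd_isInf hs₁ hs₂ hRDP
    have := hinf.2.2 (dd s₁ s₂) hd.1 hd.2.1
    have hle := mle_le this x
    have hge := dd_nonneg hs₁ hs₂ x
    simp only [Pi.zero_apply] at hle
    linarith
  · intro hz
    refine ⟨measure_isJordan zero_isMeasure, ?_, ?_⟩
    · rintro t (rfl | rfl)
      · exact isMeasure_congr hs₁.1 (fun x => by simp)
      · exact isMeasure_congr hs₂.1 (fun x => by simp)
    · intro h hJ hlb
      have := (dd_isInf hs₁ hs₂ hRDP).2.2 h hJ hlb
      exact isMeasure_congr this (fun x => by simp [Pi.sub_apply, hz x])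

end dd

/-! ### Faces -/

/-- A state dominated by a multiple of `s` lies in the face generated by `s`. -/
lemma mem_faceGen {s t : E → ℝ} (hs : IsState s) (ht : IsState t) {lam : ℝ}
    (hlam : 0 < lam) (hle : ∀ x, t x ≤ lam * s x) : t ∈ faceGen E {s} := by
  intro F hF
  obtain ⟨hface, hsF⟩ := hF
  have hsmem : s ∈ F := hsF rfl
  set μ := lam + 1 with hμdef
  have hμ : 1 < μ := by linarith
  set α := 1 / μ with hαdef
  have hα0 : 0 < α := by positivity
  have hα1 : α < 1 := by
    rw [hαdef]
    rw [div_lt_one (by linarith)]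
    linarith
  have hαμ : α * μ = 1 := by
    rw [hαdef]; field_simp
  set u : E → ℝ := fun x => (1 - α)⁻¹ * (s x - α * t x) with hu
  have hune : (1:ℝ) - α ≠ 0 := by linarith
  have hu_state : IsState u := by
    refine ⟨⟨fun a b c h => ?_, fun x => ?_⟩, ?_⟩
    · have e1 := hs.1.1 a b c h
      have e2 := ht.1.1 a b c h
      simp only [hu, e1, e2]; ring
    · have hb : t x ≤ μ * s x := by
        have := hle x
        have := hs.1.2 x
        nlinarith
      have h3 : α * t x ≤ α * (μ * s x) := mul_le_mul_of_nonneg_left hb hα0.le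
      have : 0 ≤ s x - α * t x := by nlinarith [hαμ, hs.1.2 x]
      have : 0 ≤ ((1:ℝ) - α)⁻¹ := by
        apply inv_nonneg.mpr; linarith
      simp only [hu]
      positivity
    · simp only [hu, hs.2, ht.2]
      field_simp
  have hcomb : α • t + ((1:ℝ) - α) • u = s := by
    funext x
    simp only [Pi.add_apply, Pi.smul_apply, smul_eq_mul, hu]
    field_simp
    ring
  have := hface.2.2 t ht u hu_state α hα0 hα1 (by rw [hcomb]; exact hsmem)
  exact this.1

/-- The set of states dominated by some multiple of `s` is a face containing `s`;
hence every member of `faceGen E {s}` is such a state. -/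
lemma faceGen_bound {s t : E → ℝ} (hs : IsState s) (ht : t ∈ faceGen E {s}) :
    IsState t ∧ ∃ lam : ℝ, 0 < lam ∧ ∀ x, t x ≤ lam * s x := by
  set G : Set (E → ℝ) := {u | IsState u ∧ ∃ lam : ℝ, 0 < lam ∧ ∀ x, u x ≤ lam * s x}
    with hG
  have hGface : IsFace E G := by
    refine ⟨fun u hu => hu.1, ?_, ?_⟩
    · rintro t₁ ⟨ht₁, l₁, hl₁, hb₁⟩ t₂ ⟨ht₂, l₂, hl₂, hb₂⟩ lam hl0 hl1
      refine ⟨⟨⟨fun a b c h => ?_, fun x => ?_⟩, ?_⟩, l₁ + l₂, by linarith, fun x => ?_⟩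
      · simp only [Pi.add_apply, Pi.smul_apply, smul_eq_mul,
          ht₁.1.1 a b c h, ht₂.1.1 a b c h]; ring
      · have := ht₁.1.2 x
        have := ht₂.1.2 x
        simp only [Pi.add_apply, Pi.smul_apply, smul_eq_mul]
        nlinarith
      · simp only [Pi.add_apply, Pi.smul_apply, smul_eq_mul, ht₁.2, ht₂.2]; ring
      · have b1 := hb₁ x
        have b2 := hb₂ x
        have hsx := hs.1.2 x
        have p1 := ht₁.1.2 x
        have p2 := ht₂.1.2 x
        simp only [Pi.add_apply, Pi.smul_apply, smul_eq_mul]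
        nlinarith
    · rintro t₁ ht₁ t₂ ht₂ lam hl0 hl1 ⟨-, l0, hl0', hb⟩
      constructor
      · refine ⟨ht₁, l0 / lam, by positivity, fun x => ?_⟩
        have := hb x
        simp only [Pi.add_apply, Pi.smul_apply, smul_eq_mul] at this
        have p2 := ht₂.1.2 x
        rw [div_mul_eq_mul_div, le_div_iff₀ hl0]
        nlinarith
      · refine ⟨ht₂, l0 / (1 - lam), div_pos hl0' (by linarith), fun x => ?_⟩
        have := hb x
        simp only [Pi.add_apply, Pi.smul_apply, smul_eq_mul] at this
        have p1 := ht₁.1.2 x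
        rw [div_mul_eq_mul_div, le_div_iff₀ (by linarith)]
        nlinarith
  have hsG : s ∈ G := ⟨hs, 1, one_pos, fun x => by linarith [hs.1.2 x]⟩
  have := ht G ⟨hGface, Set.singleton_subset_iff.mpr hsG⟩
  exact ⟨this.1, this.2⟩

lemma add_isMeasure {m m' : E → ℝ} (hm : IsMeasure m) (hm' : IsMeasure m') :
    IsMeasure (m + m') :=
  ⟨fun a b c h => by
      simp only [Pi.add_apply, hm.1 a b c h, hm'.1 a b c h]; ring,
   fun x => by
      have := hm.2 x; have := hm'.2 x
      simp only [Pi.add_apply]; linarith⟩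

/-- Proposition 4.2: for states `s₁, s₂` on a pseudo effect algebra
with (RDP), with generated faces `F₁, F₂`, the following are equivalent:
(i) `F₁ ∩ F₂ = ∅`; (ii) `s₁ ⋀ s₂ = 0` in `J(E)`; (iii) `s₁ ⋁ s₂ = s₁ + s₂` in `J(E)`;
(iv) each `x ∈ E` decomposes, up to `ε`, as `x = x₁ + x₂` with `sᵢ(x ∖ xᵢ) < ε`. -/
theorem stmt8 (hRDP : RDP E) (s₁ s₂ : E → ℝ) (h₁ : IsState s₁) (h₂ : IsState s₂) :
    (faceGen E {s₁} ∩ faceGen E {s₂} = ∅ ↔ IsInfIn {s₁, s₂} (0 : E → ℝ)) ∧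
    (faceGen E {s₁} ∩ faceGen E {s₂} = ∅ ↔ IsSupIn {s₁, s₂} (s₁ + s₂)) ∧
    (faceGen E {s₁} ∩ faceGen E {s₂} = ∅ ↔
      ∀ x : E, ∀ ε : ℝ, 0 < ε → ∃ x₁ x₂ c₁ c₂ : E,
        padd x₁ x₂ = some x ∧
        -- `c₁ = x ∖ x₁` and `c₂ = x ∖ x₂` are the (unique) left differences:
        padd c₁ x₁ = some x ∧ padd c₂ x₂ = some x ∧
        s₁ c₁ < ε ∧ s₂ c₂ < ε) := by
  -- (i) ↔ (ii)
  have key : faceGen E {s₁} ∩ faceGen E {s₂} = ∅ ↔ IsInfIn {s₁, s₂} (0 : E → ℝ) := by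
    constructor
    · intro hdisj
      rw [inf_zero_iff_dd h₁ h₂ hRDP]
      by_contra hne
      push_neg at hne
      obtain ⟨x₀, hx₀⟩ := hne
      have hx₀pos : 0 < dd s₁ s₂ x₀ :=
        lt_of_le_of_ne (dd_nonneg h₁ h₂ x₀) (Ne.symm hx₀)
      obtain ⟨c, hc, -⟩ := exists_unique_right x₀
      have hone : 0 < dd s₁ s₂ pone := by
        have := dd_sm h₁ h₂ hRDP x₀ c pone hc
        have := dd_nonneg h₁ h₂ c
        linarith
      set δ := dd s₁ s₂ pone with hδ
      set s : E → ℝ := fun x => δ⁻¹ * dd s₁ s₂ x with hs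
      have hδinv : 0 < δ⁻¹ := by positivity
      have hstate : IsState s := by
        refine ⟨⟨fun a b c h => by
          simp only [hs, dd_sm h₁ h₂ hRDP a b c h]; ring, fun x => ?_⟩, ?_⟩
        · have := dd_nonneg h₁ h₂ x
          simp only [hs]; positivity
        · show δ⁻¹ * dd s₁ s₂ pone = 1
          rw [← hδ]
          exact inv_mul_cancel₀ (ne_of_gt hone)
      have hmem₁ : s ∈ faceGen E {s₁} :=
        mem_faceGen h₁ hstate hδinv (fun x =>
          mul_le_mul_of_nonneg_left (dd_le_s₁ h₁ h₂ x) hδinv.le)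
      have hmem₂ : s ∈ faceGen E {s₂} :=
        mem_faceGen h₂ hstate hδinv (fun x =>
          mul_le_mul_of_nonneg_left (dd_le_s₂ h₁ h₂ x) hδinv.le)
      have : s ∈ faceGen E {s₁} ∩ faceGen E {s₂} := ⟨hmem₁, hmem₂⟩
      rw [hdisj] at this
      exact this
    · intro hinf
      rw [Set.eq_empty_iff_forall_notMem]
      rintro s ⟨hm₁, hm₂⟩
      obtain ⟨hstate, l₁, hl₁, hb₁⟩ := faceGen_bound h₁ hm₁
      obtain ⟨-, l₂, hl₂, hb₂⟩ := faceGen_bound h₂ hm₂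
      set lam := max l₁ l₂ with hlamdef
      have hlam : 0 < lam := lt_of_lt_of_le hl₁ (le_max_left _ _)
      have hlaminv : 0 < lam⁻¹ := by positivity
      set h : E → ℝ := fun x => lam⁻¹ * s x with hh
      have hmeas : IsMeasure h :=
        ⟨fun a b c hc => by simp only [hh, hstate.1.1 a b c hc]; ring,
         fun x => by have := hstate.1.2 x; simp only [hh]; positivity⟩
      have hbound : ∀ (t : E → ℝ) (l : ℝ), IsState t → l ≤ lam →
          (∀ x, s x ≤ l * t x) → MLe h t := by
        intro t l ht hl hb
        refine ⟨fun a b c hc => by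
          simp only [Pi.sub_apply, hh, ht.1.1 a b c hc, hstate.1.1 a b c hc]; ring,
          fun x => ?_⟩
        simp only [Pi.sub_apply, hh, sub_nonneg]
        have h1 : s x ≤ lam * t x := le_trans (hb x)
          (mul_le_mul_of_nonneg_right hl (ht.1.2 x))
        have h2 : lam⁻¹ * s x ≤ lam⁻¹ * (lam * t x) :=
          mul_le_mul_of_nonneg_left h1 hlaminv.le
        rw [← mul_assoc, inv_mul_cancel₀ (ne_of_gt hlam), one_mul] at h2
        exact h2
      have hle1 : MLe h s₁ := hbound s₁ l₁ h₁ (le_max_left _ _) hb₁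
      have hle2 : MLe h s₂ := hbound s₂ l₂ h₂ (le_max_right _ _) hb₂
      have hfin := hinf.2.2 h (measure_isJordan hmeas)
        (by rintro t (rfl | rfl); exacts [hle1, hle2])
      have := mle_le hfin pone
      simp only [hh, Pi.zero_apply, hstate.2, mul_one] at this
      linarith
  refine ⟨key, key.trans ?_, key.trans ?_⟩
  · -- (ii) ↔ (iii)
    constructor
    · intro hinf
      refine ⟨⟨s₁ + s₂, 0, add_isMeasure h₁.1 h₂.1, zero_isMeasure, (sub_zero _).symm⟩,
        ?_, ?_⟩
      · rintro t (rfl | rfl)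
        · exact isMeasure_congr h₂.1 (fun x => by simp [Pi.sub_apply, Pi.add_apply])
        · exact isMeasure_congr h₁.1 (fun x => by
            simp only [Pi.sub_apply, Pi.add_apply]; ring)
      · intro h hJ hub
        have hu1 := hub s₁ (Or.inl rfl)
        have hu2 := hub s₂ (Or.inr rfl)
        set k : E → ℝ := s₁ + s₂ - h with hk
        have hkJ : IsJordan k := by
          obtain ⟨m₁, m₂, hm₁, hm₂, hhm⟩ := hJ
          refine ⟨s₁ + s₂ + m₂, m₁, add_isMeasure (add_isMeasure h₁.1 h₂.1) hm₂, hm₁,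
            funext fun x => ?_⟩
          have : h x = m₁ x - m₂ x := by rw [hhm]; simp [Pi.sub_apply]
          simp only [hk, Pi.sub_apply, Pi.add_apply, this]; ring
        have hk1 : MLe k s₁ := isMeasure_congr hu2 (fun x => by
          simp only [hk, Pi.sub_apply, Pi.add_apply]; ring)
        have hk2 : MLe k s₂ := isMeasure_congr hu1 (fun x => by
          simp only [hk, Pi.sub_apply, Pi.add_apply]; ring)
        have hfin := hinf.2.2 k hkJ (by rintro t (rfl | rfl); exacts [hk1, hk2])
        exact isMeasure_congr hfin (fun x => by
          simp only [hk, Pi.sub_apply, Pi.add_apply, Pi.zero_apply]; ring)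
    · intro hsup
      refine ⟨measure_isJordan zero_isMeasure, ?_, ?_⟩
      · rintro t (rfl | rfl)
        · exact isMeasure_congr h₁.1 (fun x => by simp)
        · exact isMeasure_congr h₂.1 (fun x => by simp)
      · intro h hJ hlb
        have hl1 := hlb s₁ (Or.inl rfl)
        have hl2 := hlb s₂ (Or.inr rfl)
        set k : E → ℝ := s₁ + s₂ - h with hk
        have hkJ : IsJordan k := by
          obtain ⟨m₁, m₂, hm₁, hm₂, hhm⟩ := hJ
          refine ⟨s₁ + s₂ + m₂, m₁, add_isMeasure (add_isMeasure h₁.1 h₂.1) hm₂, hm₁,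
            funext fun x => ?_⟩
          have : h x = m₁ x - m₂ x := by rw [hhm]; simp [Pi.sub_apply]
          simp only [hk, Pi.sub_apply, Pi.add_apply, this]; ring
        have hk1 : MLe s₁ k := isMeasure_congr hl2 (fun x => by
          simp only [hk, Pi.sub_apply, Pi.add_apply]; ring)
        have hk2 : MLe s₂ k := isMeasure_congr hl1 (fun x => by
          simp only [hk, Pi.sub_apply, Pi.add_apply]; ring)
        have hfin := hsup.2.2 k hkJ (by rintro t (rfl | rfl); exacts [hk1, hk2])
        exact isMeasure_congr hfin (fun x => by
          simp only [hk, Pi.sub_apply, Pi.add_apply, Pi.zero_apply]; ring)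
  · -- (ii) ↔ (iv)
    constructor
    · intro hinf x ε hε
      have hdd := (inf_zero_iff_dd h₁ h₂ hRDP).mp hinf x
      have hlt : sInf (Dset s₁ s₂ x) < ε := by
        have : sInf (Dset s₁ s₂ x) = dd s₁ s₂ x := rfl
        rw [this, hdd]; exact hε
      obtain ⟨r, hr, hrε⟩ := exists_lt_of_csInf_lt (Dset_nonempty x) hlt
      obtain ⟨a, b, hab, rfl⟩ := hr
      obtain ⟨c₁, e, hc₁, he⟩ := shift a b x hab
      obtain ⟨c₂, e', hc₂, -⟩ := shift b e x he
      have ea := h₁.1.1 a b x hab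
      have eb := h₂.1.1 a b x hab
      have ec₁ := h₁.1.1 c₁ a x hc₁
      have ec₂ := h₂.1.1 c₂ b x hc₂
      have na := h₂.1.2 a
      have nb := h₁.1.2 b
      exact ⟨a, b, c₁, c₂, hab, hc₁, hc₂, by linarith, by linarith⟩
    · intro hdec
      refine ⟨measure_isJordan zero_isMeasure, ?_, ?_⟩
      · rintro t (rfl | rfl)
        · exact isMeasure_congr h₁.1 (fun x => by simp)
        · exact isMeasure_congr h₂.1 (fun x => by simp)
      · intro h hJ hlb
        have hsm := jordan_sm hJ
        have hl1 := hlb s₁ (Or.inl rfl)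
        have hl2 := hlb s₂ (Or.inr rfl)
        refine ⟨fun a b c hc => by
          simp only [Pi.sub_apply, Pi.zero_apply, hsm a b c hc]; ring,
          fun x => ?_⟩
        have hx0 : h x ≤ 0 := by
          by_contra hpos
          push_neg at hpos
          obtain ⟨x₁, x₂, c₁, c₂, hx, hc₁, hc₂, hε₁, hε₂⟩ :=
            hdec x (h x / 2) (by linarith)
          have e1 := hsm x₁ x₂ x hx
          have f1 := h₁.1.1 x₁ x₂ x hx
          have f2 := h₂.1.1 x₁ x₂ x hx
          have g1 := h₁.1.1 c₁ x₁ x hc₁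
          have g2 := h₂.1.1 c₂ x₂ x hc₂
          have p1 := mle_le hl2 x₁
          have p2 := mle_le hl1 x₂
          linarith
        simp only [Pi.sub_apply, Pi.zero_apply]
        linarith

end PseudoEffectAlgebra
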